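/- Strong completeness for plain interpretations: let I = ⟨A, v⟩ be a plain interpretation of P (v is injective on infons and the closure of any deductively closed set of values contains no new values of infons). Then for any context Γ there exists a closed set M with v(Γ) ⊆ M such that for every infon φ, if Γ ⊬ φ in P then v(φ) ∉ M. -/
import Mathlib


/-- Infons: formulas built from atoms, ⊤, ⊥, conjunction and primal implication. -/
inductive Infon : Type
  | atom : ℕ → Infon
  | top : Infon
  | bot : Infon
  | and : Infon → Infon → Infon
  | imp : Infon → Infon → Infon
deriving DecidableEq

/-- Derivability in the basic primal infon logic P (⊥ is an ordinary atom, no rule for it). -/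
inductive DerP : Set Infon → Infon → Prop
  | top (Γ : Set Infon) : DerP Γ .top
  | id (φ : Infon) : DerP {φ} φ
  | weak {Γ φ} (Δ : Set Infon) : DerP Γ φ → DerP (Γ ∪ Δ) φ
  | cut {Γ φ ψ} : DerP Γ φ → DerP (insert φ Γ) ψ → DerP Γ ψ
  | andI {Γ φ ψ} : DerP Γ φ → DerP Γ ψ → DerP Γ (.and φ ψ)
  | andE1 {Γ φ ψ} : DerP Γ (.and φ ψ) → DerP Γ φ
  | andE2 {Γ φ ψ} : DerP Γ (.and φ ψ) → DerP Γ ψ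
  | impI {Γ ψ} (φ : Infon) : DerP Γ ψ → DerP Γ (.imp φ ψ)
  | impE {Γ φ ψ} : DerP Γ φ → DerP Γ (.imp φ ψ) → DerP Γ ψ

/-- Derivability in P[⊥_w]: P plus the weak ⊥-elimination rule. -/
inductive DerW : Set Infon → Infon → Prop
  | top (Γ : Set Infon) : DerW Γ .top
  | id (φ : Infon) : DerW {φ} φ
  | weak {Γ φ} (Δ : Set Infon) : DerW Γ φ → DerW (Γ ∪ Δ) φ
  | cut {Γ φ ψ} : DerW Γ φ → DerW (insert φ Γ) ψ → DerW Γ ψ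
  | andI {Γ φ ψ} : DerW Γ φ → DerW Γ ψ → DerW Γ (.and φ ψ)
  | andE1 {Γ φ ψ} : DerW Γ (.and φ ψ) → DerW Γ φ
  | andE2 {Γ φ ψ} : DerW Γ (.and φ ψ) → DerW Γ ψ
  | impI {Γ ψ} (φ : Infon) : DerW Γ ψ → DerW Γ (.imp φ ψ)
  | impE {Γ φ ψ} : DerW Γ φ → DerW Γ (.imp φ ψ) → DerW Γ ψ
  | botEw {Γ φ ψ} : DerW Γ .bot → DerW Γ (.imp φ ψ) → DerW Γ ψ

/-- Positive atoms of an infon. -/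
def posAt : Infon → Set Infon
  | .and φ ψ => posAt φ ∪ posAt ψ
  | .imp _ ψ => posAt ψ
  | φ => {φ}

/-- Positive atoms of a context. -/
def posCtx (Γ : Set Infon) : Set Infon := ⋃ φ ∈ Γ, posAt φ

/-- Binary strings Σ* over Σ = {0,1}. -/
abbrev Str := List Bool

/-- A cryptographic infon algebra over binary strings: pairing with (partial) projections,
total encryption with (partial) decryption, and a nonempty public set E. -/
structure InfonAlgebra where
  pi : Str → Str → Str
  l : Str → Option Str
  r : Str → Option Str
  enc : Str → Str → Str
  dec : Str → Str → Option Str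
  E : Set Str
  E_nonempty : E.Nonempty
  l_pi : ∀ x y, l (pi x y) = some x
  r_pi : ∀ x y, r (pi x y) = some y
  dec_enc : ∀ x y, dec x (enc x y) = some y

/-- M ⊆ Σ* is closed (w.r.t. an infon algebra A). -/
def ClosedInfoSet (A : InfonAlgebra) (M : Set Str) : Prop :=
  A.E ⊆ M ∧
  (∀ a b, (a ∈ M ∧ b ∈ M) ↔ A.pi a b ∈ M) ∧
  (∀ a b, a ∈ M → A.enc a b ∈ M → b ∈ M) ∧
  (∀ a b, b ∈ M → A.enc a b ∈ M)

/-- An interpretation: an evaluation of infons by strings, commuting with the connectives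
(∧ goes to pairing, primal → goes to encryption), with v(⊤) ∈ E. -/
structure Interp (A : InfonAlgebra) where
  v : Infon → Str
  v_top : v .top ∈ A.E
  v_and : ∀ φ ψ, v (.and φ ψ) = A.pi (v φ) (v ψ)
  v_imp : ∀ φ ψ, v (.imp φ ψ) = A.enc (v φ) (v ψ)

/-- The closure of a set of strings: the least closed superset. -/
def closureA (A : InfonAlgebra) (M₀ : Set Str) : Set Str :=
  ⋂₀ {M | ClosedInfoSet A M ∧ M₀ ⊆ M}

/-- A set of infons is deductively closed if it is closed under derivability in P. -/
def DedClosed (T : Set Infon) : Prop := ∀ ψ, DerP T ψ → ψ ∈ T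

/-- A plain interpretation: v is injective, and the closure of (the set of values of) any
deductively closed set of infons contains no new values of infons. -/
def Plain (A : InfonAlgebra) (I : Interp A) : Prop :=
  Function.Injective I.v ∧
  ∀ T : Set Infon, DedClosed T →
    ∀ φ : Infon, I.v φ ∈ closureA A (I.v '' T) → I.v φ ∈ I.v '' T


lemma derP_mem {Γ : Set Infon} {φ : Infon} (h : φ ∈ Γ) : DerP Γ φ := by
  have := DerP.weak Γ (DerP.id φ)
  rwa [Set.union_eq_self_of_subset_left (Set.singleton_subset_iff.mpr h)] at this

lemma derP_cut_gen {Δ : Set Infon} {ψ : Infon} (h : DerP Δ ψ) :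
    ∀ Γ : Set Infon, (∀ χ ∈ Δ, DerP Γ χ) → DerP Γ ψ := by
  induction h with
  | top _ => intro Γ _; exact DerP.top Γ
  | id φ => intro Γ h; exact h φ rfl
  | weak Δ' h ih => intro Γ hΓ; exact ih Γ fun χ hχ => hΓ χ (Or.inl hχ)
  | cut h1 h2 ih1 ih2 =>
    intro Γ hΓ
    exact ih2 Γ fun χ hχ => by
      rcases hχ with rfl | hχ
      · exact ih1 Γ hΓ
      · exact hΓ χ hχ
  | andI _ _ ih1 ih2 => intro Γ hΓ; exact DerP.andI (ih1 Γ hΓ) (ih2 Γ hΓ)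
  | andE1 _ ih => intro Γ hΓ; exact DerP.andE1 (ih Γ hΓ)
  | andE2 _ ih => intro Γ hΓ; exact DerP.andE2 (ih Γ hΓ)
  | impI φ _ ih => intro Γ hΓ; exact DerP.impI φ (ih Γ hΓ)
  | impE _ _ ih1 ih2 => intro Γ hΓ; exact DerP.impE (ih1 Γ hΓ) (ih2 Γ hΓ)

lemma closedInfoSet_closureA (A : InfonAlgebra) (M₀ : Set Str) :
    ClosedInfoSet A (closureA A M₀) := by
  refine ⟨?_, ?_, ?_, ?_⟩
  · intro x hx M hM; exact hM.1.1 hx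
  · intro a b
    constructor
    · rintro ⟨ha, hb⟩ M hM
      exact (hM.1.2.1 a b).mp ⟨ha M hM, hb M hM⟩
    · intro h
      constructor
      · intro M hM; exact ((hM.1.2.1 a b).mpr (h M hM)).1
      · intro M hM; exact ((hM.1.2.1 a b).mpr (h M hM)).2
  · intro a b ha hab M hM
    exact hM.1.2.2.1 a b (ha M hM) (hab M hM)
  · intro a b hb M hM
    exact hM.1.2.2.2 a b (hb M hM)

lemma subset_closureA (A : InfonAlgebra) (M₀ : Set Str) : M₀ ⊆ closureA A M₀ :=
  fun x hx M hM => hM.2 hx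

/-- Strong completeness for plain interpretations: for any context Γ there is a closed set M
containing v(Γ) such that underivable infons are not valued in M. -/
theorem strong_completeness_plain (A : InfonAlgebra) (I : Interp A) (hplain : Plain A I)
    (Γ : Set Infon) :
    ∃ M : Set Str, ClosedInfoSet A M ∧ (∀ ψ ∈ Γ, I.v ψ ∈ M) ∧
      ∀ φ : Infon, ¬ DerP Γ φ → I.v φ ∉ M := by
  set T : Set Infon := {ψ | DerP Γ ψ} with hT
  have hded : DedClosed T := fun ψ h => derP_cut_gen h Γ (fun χ hχ => hχ)
  refine ⟨closureA A (I.v '' T), closedInfoSet_closureA A _, ?_, ?_⟩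
  · intro ψ hψ
    exact subset_closureA A _ ⟨ψ, derP_mem hψ, rfl⟩
  · intro φ hφ hmem
    obtain ⟨ψ, hψT, hvψ⟩ := hplain.2 T hded φ hmem
    exact hφ (hplain.1 hvψ ▸ hψT)
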